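/- Let Y be a vector lattice and X a linear subspace of Y that is directed, order dense in Y, and generates Y as a vector lattice. Then for every y ∈ Y: 0 < y if and only if for every two nonempty finite sets A, B ⊆ {x ∈ X | 0 ≤ x} with y = (sup A) − (sup B) (suprema in Y) one has Aᵘ ⊊ Bᵘ (strict inclusion), where for M ⊆ X the set Mᵘ := {x ∈ X | ∀ m ∈ M, m ≤ x} denotes the upper bounds of M within X. -/

import Mathlib

/-- Let `Y` be a vector lattice and `X` a directed, order dense linear
subspace of `Y` that generates `Y` as a vector lattice. Then for every `y ∈ Y`: `0 < y` iff
for all nonempty finite sets `A, B ⊆ {x ∈ X | 0 ≤ x}` with `y = sup A - sup B` one has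
`Aᵘ ⊊ Bᵘ` (strict inclusion), the upper bounds being taken within `X`. -/
theorem statement4
    {Y : Type*} [Lattice Y] [AddCommGroup Y] [Module ℝ Y]
    [CovariantClass Y Y (· + ·) (· ≤ ·)] [PosSMulMono ℝ Y]
    (X : Submodule ℝ Y)
    (hdir : ∀ x ∈ X, ∀ y ∈ X, ∃ z ∈ X, x ≤ z ∧ y ≤ z)
    (hdense : ∀ y : Y, IsGLB {x : Y | x ∈ X ∧ y ≤ x} y)
    (hgen : ∀ y : Y, ∃ A B : Finset Y, ∃ hA : A.Nonempty, ∃ hB : B.Nonempty,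
      (↑A : Set Y) ⊆ (X : Set Y) ∧ (↑B : Set Y) ⊆ (X : Set Y) ∧
      y = A.sup' hA id - B.sup' hB id) :
    ∀ y : Y,
      0 < y ↔
        ∀ (A B : Finset Y) (hA : A.Nonempty) (hB : B.Nonempty),
          (↑A : Set Y) ⊆ {x : Y | x ∈ X ∧ 0 ≤ x} →
          (↑B : Set Y) ⊆ {x : Y | x ∈ X ∧ 0 ≤ x} →
          y = A.sup' hA id - B.sup' hB id →
          {x : Y | x ∈ X ∧ ∀ a ∈ A, a ≤ x} ⊂ {x : Y | x ∈ X ∧ ∀ b ∈ B, b ≤ x} := by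
  classical
  intro y
  constructor
  · intro hy A B hA hB hAX hBX hrep
    set a := A.sup' hA id with ha
    set b := B.sup' hB id with hb
    have hba : b < a := sub_pos.mp (hrep ▸ hy)
    rw [Set.ssubset_def]
    constructor
    · intro x hx
      refine ⟨hx.1, fun m hm => ?_⟩
      have hax : a ≤ x := Finset.sup'_le hA id hx.2
      exact le_trans (Finset.le_sup' id hm) (le_trans hba.le hax)
    · intro hsub
      have hlb : a ∈ lowerBounds {x : Y | x ∈ X ∧ b ≤ x} := by
        intro x hx
        have hx' := hsub ⟨hx.1, fun m hm => le_trans (Finset.le_sup' id hm) hx.2⟩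
        exact Finset.sup'_le hA id hx'.2
      exact absurd ((hdense b).2 hlb) hba.not_ge
  · intro h
    obtain ⟨A', B', hA', hB', hAX, hBX, hrep⟩ := hgen y
    -- find a common upper bound z ∈ X of the negatives of all elements of A' ∪ B'
    have hub : ∀ s : Finset Y, (↑s : Set Y) ⊆ (X : Set Y) → ∃ z ∈ X, ∀ c ∈ s, -c ≤ z := by
      intro s
      induction s using Finset.induction with
      | empty => exact fun _ => ⟨0, X.zero_mem, by simp⟩
      | @insert c t hct ih =>
        intro hsX
        obtain ⟨z0, hz0X, hz0⟩ := ih (fun x hx => hsX (Finset.mem_coe.mpr (Finset.mem_insert_of_mem hx)))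
        have hcX : -c ∈ X := X.neg_mem (hsX (Finset.mem_insert_self c t))
        obtain ⟨z, hzX, hz1, hz2⟩ := hdir (-c) hcX z0 hz0X
        refine ⟨z, hzX, fun d hd => ?_⟩
        rcases Finset.mem_insert.mp hd with rfl | hd
        · exact hz1
        · exact le_trans (hz0 d hd) hz2
    obtain ⟨z, hzX, hz⟩ := hub (A' ∪ B') (by
      intro x hx
      rcases Finset.mem_coe.mp hx with hx'
      rcases Finset.mem_union.mp hx' with h1 | h1
      · exact hAX h1
      · exact hBX h1)
    set A : Finset Y := A'.image (· + z) with hAdef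
    set B : Finset Y := B'.image (· + z) with hBdef
    have hAne : A.Nonempty := hA'.image _
    have hBne : B.Nonempty := hB'.image _
    have hsupadd : ∀ (s : Finset Y) (hs : s.Nonempty),
        (s.image (· + z)).sup' (hs.image _) id = s.sup' hs id + z := by
      intro s hs
      rw [Finset.sup'_image]
      · rw [Finset.comp_sup'_eq_sup'_comp hs (· + z) (fun x y => by
          simp only [sup_add])]
        rfl
    have hApos : (↑A : Set Y) ⊆ {x : Y | x ∈ X ∧ 0 ≤ x} := by
      intro x hx
      obtain ⟨c, hc, rfl⟩ := Finset.mem_image.mp (Finset.mem_coe.mp hx)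
      refine ⟨X.add_mem (hAX hc) hzX, ?_⟩
      have := hz c (Finset.mem_union_left _ hc)
      calc (0 : Y) = c + -c := by abel
        _ ≤ c + z := add_le_add_right this c
    have hBpos : (↑B : Set Y) ⊆ {x : Y | x ∈ X ∧ 0 ≤ x} := by
      intro x hx
      obtain ⟨c, hc, rfl⟩ := Finset.mem_image.mp (Finset.mem_coe.mp hx)
      refine ⟨X.add_mem (hBX hc) hzX, ?_⟩
      have := hz c (Finset.mem_union_right _ hc)
      calc (0 : Y) = c + -c := by abel
        _ ≤ c + z := add_le_add_right this c
    have e1 : A.sup' hAne id = A'.sup' hA' id + z := hsupadd A' hA'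
    have e2 : B.sup' hBne id = B'.sup' hB' id + z := hsupadd B' hB'
    have hrep' : y = A.sup' hAne id - B.sup' hBne id := by
      rw [e1, e2, hrep]; abel
    have hss := h A B hAne hBne hApos hBpos hrep'
    rw [Set.ssubset_def] at hss
    obtain ⟨hsub, hnsub⟩ := hss
    set a := A.sup' hAne id with ha
    set b := B.sup' hBne id with hb
    have hble : b ≤ a := by
      refine (hdense a).2 ?_
      intro x hx
      have hx' := hsub ⟨hx.1, fun m hm => le_trans (Finset.le_sup' id hm) hx.2⟩
      exact Finset.sup'_le hBne id hx'.2
    have hne : b ≠ a := by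
      intro heq
      apply hnsub
      intro x hx
      refine ⟨hx.1, fun m hm => ?_⟩
      have hbx : b ≤ x := Finset.sup'_le hBne id hx.2
      rw [heq] at hbx
      exact le_trans (Finset.le_sup' id hm) hbx
    have : b < a := lt_of_le_of_ne hble hne
    rw [hrep']
    exact sub_pos.mpr this
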